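/- Let σ > 0 and α ∈ ℝ, and define J_{α,σ}(s) = (σ/3)·(max{‖s‖, -α/σ})³ + (α/2)·(max{‖s‖, -α/σ})² for s ∈ ℝⁿ. Then J_{α,σ} is convex on ℝⁿ. -/

import Mathlib

open Set

lemma cubic_hasDerivAt (σ α u : ℝ) :
    HasDerivAt (fun u : ℝ => σ / 3 * u ^ 3 + α / 2 * u ^ 2) (σ * u ^ 2 + α * u) u := by
  have h1 : HasDerivAt (fun u : ℝ => σ / 3 * u ^ 3) (σ / 3 * (3 * u ^ 2)) u :=
    ((hasDerivAt_pow 3 u)).const_mul (σ / 3)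
  have h2 : HasDerivAt (fun u : ℝ => α / 2 * u ^ 2) (α / 2 * (2 * u ^ 1)) u :=
    ((hasDerivAt_pow 2 u)).const_mul (α / 2)
  have := h1.add h2
  exact this.congr_deriv (by ring)

lemma quad_hasDerivAt (σ α u : ℝ) :
    HasDerivAt (fun u : ℝ => σ * u ^ 2 + α * u) (2 * σ * u + α) u := by
  have h1 : HasDerivAt (fun u : ℝ => σ * u ^ 2) (σ * (2 * u ^ 1)) u :=
    (hasDerivAt_pow 2 u).const_mul σ
  have h2 : HasDerivAt (fun u : ℝ => α * u) α u := by
    simpa using (hasDerivAt_id u).const_mul α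
  have := h1.add h2
  exact this.congr_deriv (by ring)

lemma cubic_convex (σ α : ℝ) (hσ : 0 < σ) :
    ConvexOn ℝ (Ici (max (-α / σ) 0)) (fun u : ℝ => σ / 3 * u ^ 3 + α / 2 * u ^ 2) := by
  set c := max (-α / σ) 0 with hc
  refine convexOn_of_hasDerivWithinAt2_nonneg (convex_Ici c)
    (f' := fun u => σ * u ^ 2 + α * u) (f'' := fun u => 2 * σ * u + α)
    (by fun_prop) (fun x _ => (cubic_hasDerivAt σ α x).hasDerivWithinAt)
    (fun x _ => (quad_hasDerivAt σ α x).hasDerivWithinAt) ?_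
  intro x hx
  rw [interior_Ici, mem_Ioi] at hx
  have h1 : -α / σ ≤ x := le_of_lt (lt_of_le_of_lt (le_max_left _ _) hx)
  have h2 : -α ≤ σ * x := by
    rwa [div_le_iff₀ hσ, mul_comm] at h1
  have h3 : 0 < x := lt_of_le_of_lt (le_max_right _ _) hx
  have h4 : 0 < σ * x := mul_pos hσ h3
  show (0:ℝ) ≤ 2 * σ * x + α
  linarith

lemma cubic_mono (σ α : ℝ) (hσ : 0 < σ) :
    MonotoneOn (fun u : ℝ => σ / 3 * u ^ 3 + α / 2 * u ^ 2) (Ici (max (-α / σ) 0)) := by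
  set c := max (-α / σ) 0 with hc
  have := StrictMonoOn.monotoneOn <| strictMonoOn_of_deriv_pos (convex_Ici c)
    (f := fun u : ℝ => σ / 3 * u ^ 3 + α / 2 * u ^ 2) (by fun_prop) ?_
  · exact this
  intro x hx
  rw [interior_Ici, mem_Ioi] at hx
  rw [(cubic_hasDerivAt σ α x).deriv]
  have h1 : -α / σ < x := lt_of_le_of_lt (le_max_left _ _) hx
  have h2 : -α < σ * x := by rwa [div_lt_iff₀ hσ, mul_comm] at h1
  have h3 : 0 < x := lt_of_le_of_lt (le_max_right _ _) hx
  nlinarith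

theorem stmt_3 (n : ℕ) (σ α : ℝ) (hσ : 0 < σ) :
    ConvexOn ℝ Set.univ
      (fun s : EuclideanSpace ℝ (Fin n) =>
        σ / 3 * (max ‖s‖ (-α / σ)) ^ 3 + α / 2 * (max ‖s‖ (-α / σ)) ^ 2) := by
  set c := max (-α / σ) 0 with hc
  set h : ℝ → ℝ := fun u => σ / 3 * u ^ 3 + α / 2 * u ^ 2 with hh
  set φ : ℝ → ℝ := fun t => h (max t c) with hφ
  have himg_eq : (fun t : ℝ => max t c) '' univ = Ici c := by
    rw [image_univ]
    ext y
    constructor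
    · rintro ⟨x, rfl⟩
      exact le_max_right x c
    · intro hy
      exact ⟨y, max_eq_left hy⟩
  have hm_conv : ConvexOn ℝ (univ : Set ℝ) (fun t : ℝ => max t c) := by
    refine ⟨convex_univ, ?_⟩
    intro x _ y _ a b ha hb hab
    simp only [smul_eq_mul]
    apply max_le
    · have : a * x + b * y ≤ a * max x c + b * max y c := by
        gcongr
        · exact le_max_left x c
        · exact le_max_left y c
      exact this
    · have hx' := mul_le_mul_of_nonneg_left (le_max_right x c) ha
      have hy' := mul_le_mul_of_nonneg_left (le_max_right y c) hb
      have habc : a * c + b * c = c := by rw [← add_mul, hab, one_mul]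
      linarith
  have hφ_conv : ConvexOn ℝ (univ : Set ℝ) φ := by
    show ConvexOn ℝ (univ : Set ℝ) (h ∘ fun t : ℝ => max t c)
    refine ConvexOn.comp ?_ hm_conv ?_
    · rw [himg_eq]; exact cubic_convex σ α hσ
    · rw [himg_eq]; exact cubic_mono σ α hσ
  have hφ_mono : Monotone φ := by
    intro x y hxy
    exact (cubic_mono σ α hσ) (mem_Ici.mpr (le_max_right _ _)) (mem_Ici.mpr (le_max_right _ _))
      (max_le_max hxy le_rfl)
  have hrw : ∀ s : EuclideanSpace ℝ (Fin n),
      σ / 3 * (max ‖s‖ (-α / σ)) ^ 3 + α / 2 * (max ‖s‖ (-α / σ)) ^ 2 = φ ‖s‖ := by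
    intro s
    have hmax : max ‖s‖ c = max ‖s‖ (-α / σ) := by
      rw [hc, ← max_assoc, max_eq_left]
      exact le_trans (norm_nonneg s) (le_max_left _ _)
    simp only [hφ, hh, hmax]
  refine ⟨convex_univ, ?_⟩
  intro x _ y _ a b ha hb hab
  simp only [smul_eq_mul, hrw]
  have h1 : ‖a • x + b • y‖ ≤ a * ‖x‖ + b * ‖y‖ := by
    calc ‖a • x + b • y‖ ≤ ‖a • x‖ + ‖b • y‖ := norm_add_le _ _
    _ = a * ‖x‖ + b * ‖y‖ := by
        rw [norm_smul, norm_smul, Real.norm_eq_abs, Real.norm_eq_abs,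
          abs_of_nonneg ha, abs_of_nonneg hb]
  have h2 := hφ_mono h1
  have h3 := hφ_conv.2 (mem_univ ‖x‖) (mem_univ ‖y‖) ha hb hab
  simp only [smul_eq_mul] at h3
  exact h2.trans h3
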